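/- arXiv:1611.04676 — 2 statements merged into one kernel-verified Lean document; each statement's English description precedes it below -/
import Mathlib

section
/- The Goldman Lie algebra of the torus over ℤ is not finitely generated as a Lie algebra over ℤ. More precisely, for every finite subset S of ℤ[ℤ²], the Lie subring generated by S is a proper subset of ℤ[ℤ²]. -/
noncomputable def gb (x y : (ℤ × ℤ) →₀ ℤ) : (ℤ × ℤ) →₀ ℤ :=
  x.sum fun p a => y.sum fun q b =>
    Finsupp.single (p.1 + q.1, p.2 + q.2) (a * b * (p.1 * q.2 - p.2 * q.1))

noncomputable def e (p : ℤ × ℤ) : (ℤ × ℤ) →₀ ℤ := Finsupp.single p 1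

theorem goldman_not_fg_int (S : Finset ((ℤ × ℤ) →₀ ℤ)) :
    ∃ P : Submodule ℤ ((ℤ × ℤ) →₀ ℤ),
      (∀ s ∈ S, s ∈ P) ∧ (∀ x ∈ P, ∀ y ∈ P, gb x y ∈ P) ∧ P ≠ ⊤ := by
  set M : ℕ := S.sup fun s => s.support.sup fun p => p.1.natAbs with hM
  set q : ℤ := (M : ℤ) + 2 with hq
  refine ⟨Submodule.comap (Finsupp.lapply (q, 0) : ((ℤ × ℤ) →₀ ℤ) →ₗ[ℤ] ℤ) (Ideal.span {q}), ?_, ?_, ?_⟩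
  · intro s hs
    simp only [Submodule.mem_comap, Finsupp.lapply_apply, Ideal.mem_span_singleton]
    have hz : s (q, 0) = 0 := by
      by_contra h
      have hmem : ((q, 0) : ℤ × ℤ) ∈ s.support := Finsupp.mem_support_iff.mpr h
      have h1 : ((q, 0) : ℤ × ℤ).1.natAbs ≤ s.support.sup fun p => p.1.natAbs :=
        Finset.le_sup (f := fun p : ℤ × ℤ => p.1.natAbs) hmem
      have h2 : (s.support.sup fun p => p.1.natAbs) ≤ M :=
        Finset.le_sup (f := fun s : (ℤ × ℤ) →₀ ℤ => s.support.sup fun p => p.1.natAbs) hs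
      have h3 : q.natAbs ≤ M := le_trans h1 h2
      have h4 : q.natAbs = M + 2 := by rw [hq]; omega
      omega
    rw [hz]
    exact dvd_zero q
  · intro x _ y _
    simp only [Submodule.mem_comap, Finsupp.lapply_apply, Ideal.mem_span_singleton]
    rw [gb]
    simp only [Finsupp.sum_apply]
    refine Finset.dvd_sum fun p hp => ?_
    simp only [Finsupp.sum_apply]
    refine Finset.dvd_sum fun r hr => ?_
    simp only [Finsupp.single_apply]
    split
    · next h =>
      have h1 : p.1 + r.1 = q := congrArg Prod.fst h
      have h2 : p.2 + r.2 = 0 := congrArg Prod.snd h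
      have hr1 : r.1 = q - p.1 := by omega
      have hr2 : r.2 = -p.2 := by omega
      exact ⟨x p * y r * (-p.2), by rw [hr1, hr2]; ring⟩
    · exact dvd_zero q
  · intro htop
    have hmem : e (q, 0) ∈ Submodule.comap
        (Finsupp.lapply (q, 0) : ((ℤ × ℤ) →₀ ℤ) →ₗ[ℤ] ℤ) (Ideal.span {q}) := by
      rw [htop]; trivial
    simp only [Submodule.mem_comap, Finsupp.lapply_apply, Ideal.mem_span_singleton, e,
      Finsupp.single_apply, if_pos rfl] at hmem
    have := Int.le_of_dvd one_pos hmem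
    omega
end

section
/- In the Goldman Lie algebra of the torus over ℤ, for every integer n > 2 the element (n-1)·e_{(n,0)} does not lie in the span of brackets; equivalently, if a finite sum Σ_s ε_s [e_{(i_s,j_s)}, e_{(k_s,l_s)}] with ε_s = ±1 equals m·e_{(n,0)}, then n divides m, so it cannot equal (n-1)·e_{(n,0)}. -/
lemma gb_e (p q : ℤ × ℤ) :
    gb (e p) (e q) = Finsupp.single (p.1 + q.1, p.2 + q.2) (p.1 * q.2 - p.2 * q.1) := by
  unfold gb e
  rw [Finsupp.sum_single_index, Finsupp.sum_single_index]
  · rw [one_mul, one_mul]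
  · simp
  · simp

theorem goldman_div (n : ℤ) (hn : 2 < n) (t : ℕ) (ε : Fin t → ℤ)
    (hε : ∀ s, ε s = 1 ∨ ε s = -1) (p q : Fin t → ℤ × ℤ) (m : ℤ)
    (h : ∑ s, ε s • gb (e (p s)) (e (q s)) = m • e (n, 0)) :
    n ∣ m ∧ ∑ s, ε s • gb (e (p s)) (e (q s)) ≠ (n - 1) • e (n, 0) := by
  have h2 := DFunLike.congr_fun h (n, 0)
  simp only [gb_e] at h2
  simp only [e, Finsupp.finset_sum_apply, Finsupp.smul_apply, Finsupp.single_apply,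
    smul_eq_mul, mul_one, if_true] at h2
  have hdvd : n ∣ m := by
    rw [← h2]
    apply Finset.dvd_sum
    intro s _
    by_cases hc : ((p s).1 + (q s).1, (p s).2 + (q s).2) = ((n : ℤ), (0 : ℤ))
    · rw [if_pos hc]
      have h1 : (p s).1 + (q s).1 = n := congrArg Prod.fst hc
      have h2 : (p s).2 + (q s).2 = 0 := congrArg Prod.snd hc
      have : (p s).1 * (q s).2 - (p s).2 * (q s).1 = (q s).2 * n := by
        have : (p s).2 = -(q s).2 := by linarith
        rw [this, ← h1]; ring
      rw [this]
      exact Dvd.dvd.mul_left ⟨(q s).2, by ring⟩ _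
    · rw [if_neg hc]; simp
  refine ⟨hdvd, ?_⟩
  intro heq
  have hm : m = n - 1 := by
    have := DFunLike.congr_fun (h.symm.trans heq) (n, 0)
    simpa [e, Finsupp.single_apply] using this
  have := Int.le_of_dvd (by omega) (hm ▸ hdvd)
  omega
end
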